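/- Let $K_r^d$ be the complete $d$-uniform hypergraph on a vertex set $V$ of size $r$, and let $G_1,\ldots,G_m$ be $d$-uniform hypergraphs on $V$, each of which is $c$-partite (its vertex set can be partitioned into $c$ classes such that every edge has all its vertices in distinct classes), with $\bigcup_{i=1}^m G_i = K_r^d$. Let $\tau(G_i)$ denote the number of non-isolated vertices of $G_i$. Then $\log\frac{c}{d-1}\sum_{i=1}^m \tau(G_i) \geq \log\frac{r}{d-1}$. -/

import Mathlib

open Finset
open scoped Classical

/-- The number of non-isolated vertices of a hypergraph given by its edge set. -/
noncomputable def tauH {V : Type*} [Fintype V] (G : Finset (Finset V)) : ℕ :=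
  (Finset.univ.filter fun v : V => ∃ e ∈ G, v ∈ e).card

lemma aux_card_filter_card_eq {α : Type*} [Fintype α] (k : ℕ) :
    ((Finset.univ : Finset (Finset α)).filter fun s => s.card = k).card
      = (Fintype.card α).choose k := by
  rw [← Finset.powerset_univ, ← Finset.powersetCard_eq_filter,
    Finset.card_powersetCard, Finset.card_univ]

lemma aux_card_filter_card_eq_mem {α : Type*} [Fintype α] [DecidableEq α] (k : ℕ) (x : α) :
    ((Finset.univ : Finset (Finset α)).filter fun s => s.card = k + 1 ∧ x ∈ s).card
      = (Fintype.card α - 1).choose k := by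
  have h : ((Finset.univ : Finset (Finset α)).filter fun s => s.card = k + 1 ∧ x ∈ s).card
      = ((Finset.univ.erase x).powersetCard k).card := by
    refine Finset.card_bij' (fun s _ => s.erase x) (fun t _ => insert x t) ?_ ?_ ?_ ?_
    · intro s hs
      simp only [Finset.mem_filter, Finset.mem_univ, true_and] at hs
      rw [Finset.mem_powersetCard]
      refine ⟨Finset.erase_subset_erase x (Finset.subset_univ s), ?_⟩
      rw [Finset.card_erase_of_mem hs.2, hs.1]
      omega
    · intro t ht
      rw [Finset.mem_powersetCard] at ht
      have hxt : x ∉ t := fun hx => (Finset.notMem_erase x _) (ht.1 hx)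
      simp only [Finset.mem_filter, Finset.mem_univ, true_and]
      exact ⟨by rw [Finset.card_insert_of_notMem hxt, ht.2], Finset.mem_insert_self x t⟩
    · intro s hs
      simp only [Finset.mem_filter, Finset.mem_univ, true_and] at hs
      exact Finset.insert_erase hs.2
    · intro t ht
      rw [Finset.mem_powersetCard] at ht
      have hxt : x ∉ t := fun hx => (Finset.notMem_erase x _) (ht.1 hx)
      exact Finset.erase_insert hxt
  rw [h, Finset.card_powersetCard, Finset.card_erase_of_mem (Finset.mem_univ x),
    Finset.card_univ]

lemma aux_piFinset_filter_card {ι : Type*} [Fintype ι] [DecidableEq ι] {α : ι → Type*}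
    [∀ i, Fintype (α i)] (B : ∀ i, Finset (α i)) (P : ∀ i, α i → Prop) :
    ((Fintype.piFinset B).filter fun S => ∀ i, P i (S i)).card
      = ∏ i, ((B i).filter fun a => P i a).card := by
  rw [← Fintype.card_piFinset]
  congr 1
  ext S
  simp only [Finset.mem_filter, Fintype.mem_piFinset, ← forall_and]

set_option maxHeartbeats 1000000 in
/-- Hansel's lemma for hypergraphs. -/
theorem hansel_hypergraph {V : Type*} [Fintype V] [DecidableEq V]
    (r d c m : ℕ) (hrV : Fintype.card V = r) (hd : 2 ≤ d) (hdr : d ≤ r) (hdc : d ≤ c)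
    (G : Fin m → Finset (Finset V))
    (huniform : ∀ i, ∀ e ∈ G i, e.card = d)
    (hpartite : ∀ i, ∃ f : V → Fin c, ∀ e ∈ G i, Set.InjOn f (e : Set V))
    (hcover : ∀ e : Finset V, e.card = d → ∃ i, e ∈ G i) :
    Real.logb 2 ((c : ℝ) / ((d : ℝ) - 1)) * ∑ i, (tauH (G i) : ℝ)
      ≥ Real.logb 2 ((r : ℝ) / ((d : ℝ) - 1)) := by
  classical
  choose f hf using hpartite
  -- notation
  set NI : V → Fin m → Prop := fun v i => ∃ e ∈ G i, v ∈ e with hNIdef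
  set n : V → ℕ := fun v => (Finset.univ.filter fun i => NI v i).card with hndef
  set T : ℕ := ∑ i, tauH (G i) with hTdef
  set a : ℕ := (c - 1).choose (d - 2) with hadef
  set b : ℕ := c.choose (d - 1) with hbdef
  have hd1 : 1 ≤ d - 1 := by omega
  have hc1 : 1 ≤ c := by omega
  -- the collection of choices
  set A : Finset (Fin m → Finset (Fin c)) :=
    Fintype.piFinset (fun _ : Fin m =>
      (Finset.univ : Finset (Finset (Fin c))).filter fun s => s.card = d - 1) with hAdef
  set good : V → (Fin m → Finset (Fin c)) → Prop :=
    fun v S => ∀ i, NI v i → f i v ∈ S i with hgooddef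
  -- Claim 1 : for each S ∈ A, at most d-1 vertices are good
  have claim1 : ∀ S ∈ A, (Finset.univ.filter fun v => good v S).card ≤ d - 1 := by
    intro S hS
    by_contra hc'
    push_neg at hc'
    have hdle : d ≤ (Finset.univ.filter fun v => good v S).card := by omega
    obtain ⟨e, he, hecard⟩ := Finset.exists_subset_card_eq hdle
    obtain ⟨i, hi⟩ := hcover e hecard
    -- image of e under f i is inside S i, which has card d-1
    have hinj : Set.InjOn (f i) (e : Set V) := hf i e hi
    have himage : e.image (f i) ⊆ S i := by
      intro x hx
      obtain ⟨v, hv, rfl⟩ := Finset.mem_image.mp hx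
      have hgood : good v S := (Finset.mem_filter.mp (he hv)).2
      exact hgood i ⟨e, hi, hv⟩
    have hcardim : (e.image (f i)).card = d := by
      rw [Finset.card_image_of_injOn hinj, hecard]
    have hSi : (S i).card = d - 1 := by
      have := (Fintype.mem_piFinset.mp hS) i
      exact (Finset.mem_filter.mp this).2
    have := Finset.card_le_card himage
    omega
  -- Count: for each v, number of S ∈ A that are good for v
  have claim2 : ∀ v : V, (A.filter fun S => good v S).card = a ^ (n v) * b ^ (m - n v) := by
    intro v
    have hfil : A.filter (fun S => good v S)
        = Fintype.piFinset (fun i => (Finset.univ : Finset (Finset (Fin c))).filter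
            fun s => s.card = d - 1 ∧ (NI v i → f i v ∈ s)) := by
      ext S
      simp only [hAdef, hgooddef, Finset.mem_filter, Fintype.mem_piFinset, Finset.mem_univ,
        true_and]
      constructor
      · rintro ⟨h1, h2⟩ i
        exact ⟨h1 i, h2 i⟩
      · intro h
        exact ⟨fun i => (h i).1, fun i => (h i).2⟩
    rw [hfil, Fintype.card_piFinset]
    have hterm : ∀ i : Fin m,
        ((Finset.univ : Finset (Finset (Fin c))).filter
            fun s => s.card = d - 1 ∧ (NI v i → f i v ∈ s)).card = if NI v i then a else b := by
      intro i
      by_cases hni : NI v i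
      · rw [if_pos hni]
        have hset : Finset.filter
              (fun s : Finset (Fin c) => s.card = d - 1 ∧ (NI v i → f i v ∈ s)) Finset.univ
            = Finset.filter (fun s : Finset (Fin c) => s.card = (d - 2) + 1 ∧ f i v ∈ s)
              Finset.univ := by
          apply Finset.filter_congr
          intro s _
          constructor
          · rintro ⟨h1, h2⟩; exact ⟨by omega, h2 hni⟩
          · rintro ⟨h1, h2⟩; exact ⟨by omega, fun _ => h2⟩
        rw [hset, aux_card_filter_card_eq_mem, Fintype.card_fin, hadef]
      · rw [if_neg hni]
        have hset : Finset.filter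
              (fun s : Finset (Fin c) => s.card = d - 1 ∧ (NI v i → f i v ∈ s)) Finset.univ
            = Finset.filter (fun s : Finset (Fin c) => s.card = d - 1) Finset.univ := by
          apply Finset.filter_congr
          intro s _
          constructor
          · rintro ⟨h1, _⟩; exact h1
          · intro h1; exact ⟨h1, fun h => absurd h hni⟩
        rw [hset, aux_card_filter_card_eq, Fintype.card_fin, hbdef]
    rw [Finset.prod_congr rfl (fun i _ => hterm i), Finset.prod_ite (fun _ => a) (fun _ => b),
      Finset.prod_const, Finset.prod_const]
    have hadd := Finset.card_filter_add_card_filter_not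
      (s := (Finset.univ : Finset (Fin m))) (fun i => NI v i)
    rw [Finset.card_univ, Fintype.card_fin] at hadd
    have h1 : (Finset.univ.filter fun i => NI v i).card = n v := rfl
    have h2 : (Finset.univ.filter fun i => ¬ NI v i).card = m - n v := by
      rw [h1] at hadd; omega
    rw [h1, h2]
  -- double counting
  have hAcard : A.card = b ^ m := by
    rw [hAdef, Fintype.card_piFinset]
    simp only [aux_card_filter_card_eq, Fintype.card_fin, Finset.prod_const, Finset.card_univ,
      Fintype.card_fin, hbdef]
  have count_key : ∑ v : V, a ^ (n v) * b ^ (m - n v) ≤ (d - 1) * b ^ m := by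
    have swap : ∑ S ∈ A, (Finset.univ.filter fun v => good v S).card
        = ∑ v : V, (A.filter fun S => good v S).card := by
      simp only [Finset.card_filter]
      rw [Finset.sum_comm]
    calc ∑ v : V, a ^ (n v) * b ^ (m - n v)
        = ∑ v : V, (A.filter fun S => good v S).card := by
          exact (Finset.sum_congr rfl fun v _ => (claim2 v).symm)
      _ = ∑ S ∈ A, (Finset.univ.filter fun v => good v S).card := swap.symm
      _ ≤ ∑ S ∈ A, (d - 1) := Finset.sum_le_sum claim1
      _ = (d - 1) * b ^ m := by rw [Finset.sum_const, hAcard, smul_eq_mul, mul_comm]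
  -- pass to reals
  have hb_pos : 0 < b := Nat.choose_pos (by omega)
  have hbR : (0 : ℝ) < (b : ℝ) := by exact_mod_cast hb_pos
  have hcR : (0 : ℝ) < (c : ℝ) := by exact_mod_cast hc1
  set q : ℝ := ((d : ℝ) - 1) / c with hqdef
  have hdR1 : (1 : ℝ) ≤ (d : ℝ) - 1 := by
    have : (2 : ℝ) ≤ (d : ℝ) := by exact_mod_cast hd
    linarith
  have hq_pos : 0 < q := div_pos (by linarith) hcR
  have hq_le1 : q ≤ 1 := by
    rw [div_le_one hcR]
    have : (d : ℝ) ≤ (c : ℝ) := by exact_mod_cast hdc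
    linarith
  -- a / b = q
  have hab : (a : ℝ) = q * b := by
    have hid : c * a = b * (d - 1) := by
      have := Nat.add_one_mul_choose_eq (c - 1) (d - 2)
      have h1 : (c - 1) + 1 = c := by omega
      have h2 : (d - 2) + 1 = d - 1 := by omega
      rw [h1, h2] at this
      rw [hadef, hbdef, this]
    have hidR : (c : ℝ) * a = (b : ℝ) * ((d : ℝ) - 1) := by
      have := congrArg (fun x : ℕ => (x : ℝ)) hid
      push_cast at this
      have hd1R : ((d : ℝ) - 1) = ((d - 1 : ℕ) : ℝ) := by
        have : (1 : ℝ) ≤ (d : ℝ) := by linarith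
        push_cast [Nat.cast_sub (by omega : 1 ≤ d)]
        ring
      rw [hd1R]
      exact_mod_cast this
    rw [hqdef]
    field_simp
    linarith [hidR]
  have hnm : ∀ v : V, n v ≤ m := by
    intro v
    rw [hndef]
    simpa using Finset.card_filter_le Finset.univ (fun i => NI v i)
  -- sum of q powers bounded
  have sumq : ∑ v : V, q ^ (n v) ≤ (d : ℝ) - 1 := by
    have key : ∀ v : V, q ^ (n v) * (b : ℝ) ^ m = (a : ℝ) ^ (n v) * (b : ℝ) ^ (m - n v) := by
      intro v
      rw [hab, mul_pow]
      have hmv := hnm v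
      have : (b : ℝ) ^ m = (b : ℝ) ^ (n v) * (b : ℝ) ^ (m - n v) := by
        rw [← pow_add]
        congr 1
        omega
      rw [this]
      ring
    have hR : ∑ v : V, (a : ℝ) ^ (n v) * (b : ℝ) ^ (m - n v) ≤ ((d : ℝ) - 1) * (b : ℝ) ^ m := by
      have := count_key
      have hcast : ((∑ v : V, a ^ (n v) * b ^ (m - n v) : ℕ) : ℝ)
          ≤ (((d - 1) * b ^ m : ℕ) : ℝ) := by exact_mod_cast this
      push_cast at hcast
      calc ∑ v : V, (a : ℝ) ^ (n v) * (b : ℝ) ^ (m - n v)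
          = ((∑ v : V, a ^ (n v) * b ^ (m - n v) : ℕ) : ℝ) := by push_cast; rfl
        _ ≤ (((d - 1) * b ^ m : ℕ) : ℝ) := by exact_mod_cast this
        _ = ((d : ℝ) - 1) * (b : ℝ) ^ m := by
            push_cast [Nat.cast_sub (by omega : 1 ≤ d)]
            ring
    have : (∑ v : V, q ^ (n v)) * (b : ℝ) ^ m ≤ ((d : ℝ) - 1) * (b : ℝ) ^ m := by
      rw [Finset.sum_mul]
      calc ∑ v : V, q ^ (n v) * (b : ℝ) ^ m
          = ∑ v : V, (a : ℝ) ^ (n v) * (b : ℝ) ^ (m - n v) :=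
            Finset.sum_congr rfl fun v _ => key v
        _ ≤ ((d : ℝ) - 1) * (b : ℝ) ^ m := hR
    exact le_of_mul_le_mul_right this (pow_pos hbR m)
  -- each n v ≤ T
  have hnT : ∀ v : V, n v ≤ T := by
    intro v
    rw [hndef, hTdef]
    calc (Finset.univ.filter fun i => NI v i).card
        = ∑ i ∈ Finset.univ.filter fun i => NI v i, 1 := by
          rw [Finset.sum_const, smul_eq_mul, mul_one]
      _ ≤ ∑ i ∈ Finset.univ.filter fun i => NI v i, tauH (G i) := by
          refine Finset.sum_le_sum fun i hi => ?_
          have hni : NI v i := (Finset.mem_filter.mp hi).2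
          have hpos : 0 < tauH (G i) := by
            unfold tauH
            refine Finset.card_pos.mpr ⟨v, ?_⟩
            simp only [Finset.mem_filter, Finset.mem_univ, true_and]
            exact hni
          exact hpos
      _ ≤ ∑ i, tauH (G i) := Finset.sum_le_sum_of_subset (Finset.filter_subset _ _)
  -- main inequality: r * q^T ≤ d - 1
  have main : (r : ℝ) * q ^ T ≤ (d : ℝ) - 1 := by
    calc (r : ℝ) * q ^ T = ∑ _v : V, q ^ T := by
          rw [Finset.sum_const, Finset.card_univ, hrV, nsmul_eq_mul]
      _ ≤ ∑ v : V, q ^ (n v) :=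
          Finset.sum_le_sum fun v _ => pow_le_pow_of_le_one (le_of_lt hq_pos) hq_le1 (hnT v)
      _ ≤ (d : ℝ) - 1 := sumq
  -- pass to logs
  have hrR : (0 : ℝ) < (r : ℝ) := by
    have : 2 ≤ r := le_trans hd hdr
    exact_mod_cast Nat.lt_of_lt_of_le Nat.zero_lt_two this
  have hx_pos : (0 : ℝ) < (c : ℝ) / ((d : ℝ) - 1) := div_pos hcR (by linarith)
  have hfrac : (r : ℝ) / ((d : ℝ) - 1) ≤ ((c : ℝ) / ((d : ℝ) - 1)) ^ T := by
    have hqinv : (c : ℝ) / ((d : ℝ) - 1) = q⁻¹ := by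
      rw [hqdef, inv_div]
    have hpow : (0 : ℝ) < q ^ T := pow_pos hq_pos T
    rw [hqinv, inv_pow]
    rw [div_le_iff₀ (by linarith : (0 : ℝ) < (d : ℝ) - 1), inv_mul_eq_div,
      le_div_iff₀ hpow]
    exact main
  have hlog := (Real.logb_le_logb (by norm_num : (1:ℝ) < 2)
    (div_pos hrR (by linarith)) (lt_of_lt_of_le (div_pos hrR (by linarith)) hfrac)).mpr hfrac
  rw [Real.logb_pow] at hlog
  have hsum : ∑ i, (tauH (G i) : ℝ) = (T : ℝ) := by rw [hTdef]; push_cast; rfl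
  rw [ge_iff_le, hsum, mul_comm]
  exact hlog
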